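/- The 13×13 circulant matrix M with first row (x, 1, -1, 1, 0, -1, -1, 1, 1, 1, 0, 1, 0) has the property that any two distinct rows are orthogonal with respect to the standard inner product when the contributions of the positions containing the symbol x are ignored; equivalently, replacing x by 0, any two distinct rows of the resulting circulant matrix whose supports avoid the diagonal positions of x have inner product equal to the negative of the product of the entries at the x-positions. Concretely: the 13×13 circulant matrix with first row (0,1,-1,1,0,-1,-1,1,1,1,0,1,0) satisfies that for distinct rows r, s, the inner product of row r and row s equals 0 whenever positions r and s are excluded from the sum. -/

import Mathlib

theorem stmt_14 :
    let v : Fin 13 → ℝ := ![0, 1, -1, 1, 0, -1, -1, 1, 1, 1, 0, 1, 0]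
    let M : Matrix (Fin 13) (Fin 13) ℝ := fun i j => v (j - i)
    ∀ r s : Fin 13, r ≠ s →
      ∑ t ∈ Finset.univ \ {r, s}, M r t * M s t = 0 := by
  intro v M r s hrs
  have aux : ∀ d : Fin 13, d ≠ 0 → ∑ t : Fin 13, v (t + d) * v t = 0 := by
    intro d hd
    fin_cases d
    · exact absurd rfl hd
    all_goals
      simp only [Fin.sum_univ_succ, Fin.sum_univ_zero, v]
      norm_num [Fin.add_def, Matrix.cons_val_zero, Matrix.cons_val_one, Matrix.cons_val_two, Matrix.tail_cons, Matrix.head_cons]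
  have h0 : ∀ t, M t t = 0 := by intro t; simp [M, v]
  have hfull : ∑ t ∈ Finset.univ \ {r, s}, M r t * M s t = ∑ t : Fin 13, M r t * M s t := by
    rw [Finset.sum_sdiff_eq_sub (Finset.subset_univ _), Finset.sum_pair hrs]
    simp [h0]
  rw [hfull]
  have key := aux (s - r) (by simpa [sub_eq_zero] using (Ne.symm hrs))
  calc ∑ t : Fin 13, M r t * M s t = ∑ t : Fin 13, v (t + (s - r)) * v t := by
        apply Fintype.sum_equiv (Equiv.subRight s)
        intro t
        have h1 : (Equiv.subRight s t) + (s - r) = t - r := by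
          simp only [Equiv.subRight_apply]; abel
        have h2 : (Equiv.subRight s t) = t - s := rfl
        rw [h1, h2]
    _ = 0 := key
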